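/- For valid UL-parameters (u,l) and each k ∈ {0,...,T}, the vector p^(k) with p^(k)_t = (u_t − u_{t−1})/Δt for t ≤ k and p^(k)_t = (l_{T−t+1} − l_{T−t})/Δt for t > k (u_0 = l_0 = 0) belongs to F(u,l); i.e., its prefix sums satisfy Δt·∑_{j=1}^m p^(k)_j ≤ u_m and its suffix sums satisfy Δt·∑_{j=T−m+1}^T p^(k)_j ≥ l_m for all m ∈ {1,...,T}. -/

import Mathlib

open Finset

noncomputable section

/-- The UL-flexibility set: all signals `p` such that for every nonempty
subset `S` of time indices with `|S| = k`, `l k ≤ Δt * ∑_{t∈S} p t ≤ u k`. -/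
def ULset (T : ℕ) (Δt : ℝ) (u l : ℕ → ℝ) : Set (Fin T → ℝ) :=
  {p | ∀ S : Finset (Fin T), S.Nonempty →
    l S.card ≤ Δt * ∑ t ∈ S, p t ∧ Δt * ∑ t ∈ S, p t ≤ u S.card}

/-- Zero extension of a parameter vector: value 0 at index 0. -/
def ZExt (v : ℕ → ℝ) : ℕ → ℝ := fun k => if k = 0 then 0 else v k

/-- Valid UL parameters: the zero-extension of `u` is concave, nonnegative and
increasing; the zero-extension of `l` is convex, nonnegative and increasing; and
the zero-extension of `u` plus the reversed zero-extension of `l` is increasing. -/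
def ValidUL (T : ℕ) (u l : ℕ → ℝ) : Prop :=
  (∀ j, 1 ≤ j → j + 1 ≤ T → ZExt u (j - 1) + ZExt u (j + 1) ≤ 2 * ZExt u j) ∧
  (∀ k, k ≤ T → 0 ≤ ZExt u k) ∧
  (∀ j, j + 1 ≤ T → ZExt u j ≤ ZExt u (j + 1)) ∧
  (∀ j, 1 ≤ j → j + 1 ≤ T → 2 * ZExt l j ≤ ZExt l (j - 1) + ZExt l (j + 1)) ∧
  (∀ k, k ≤ T → 0 ≤ ZExt l k) ∧
  (∀ j, j + 1 ≤ T → ZExt l j ≤ ZExt l (j + 1)) ∧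
  (∀ j, 1 ≤ j → j ≤ T →
    ZExt l (T - j + 1) - ZExt l (T - j) ≤ ZExt u j - ZExt u (j - 1))

/-- Vertex candidate `p^(k)` (0-based time index `t` corresponds to paper index `t+1`). -/
def ULvertex (T : ℕ) (Δt : ℝ) (u l : ℕ → ℝ) (k : ℕ) : Fin T → ℝ :=
  fun t => if (t : ℕ) < k then (ZExt u ((t : ℕ) + 1) - ZExt u (t : ℕ)) / Δt
           else (ZExt l (T - (t : ℕ)) - ZExt l (T - (t : ℕ) - 1)) / Δt

namespace ULaux

/-- Convert a sum over the prefix filter in `Fin T` to a sum over `range m`. -/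
lemma sum_filter_lt (T m : ℕ) (hm : m ≤ T) (g : ℕ → ℝ) :
    ∑ j ∈ Finset.univ.filter (fun j : Fin T => (j : ℕ) < m), g (j : ℕ)
      = ∑ i ∈ Finset.range m, g i := by
  rw [Finset.sum_filter, Fin.sum_univ_eq_sum_range (fun i => if i < m then g i else 0),
    ← Finset.sum_filter]
  congr 1
  ext i
  simp only [Finset.mem_filter, Finset.mem_range]
  omega

/-- Convert a sum over the suffix filter in `Fin T` to a sum over `Ico (T-m) T`. -/
lemma sum_filter_ge (T m : ℕ) (g : ℕ → ℝ) :
    ∑ j ∈ Finset.univ.filter (fun j : Fin T => T - m ≤ (j : ℕ)), g (j : ℕ)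
      = ∑ i ∈ Finset.Ico (T - m) T, g i := by
  rw [Finset.sum_filter, Fin.sum_univ_eq_sum_range (fun i => if T - m ≤ i then g i else 0),
    ← Finset.sum_filter]
  congr 1
  ext i
  simp only [Finset.mem_filter, Finset.mem_range, Finset.mem_Ico]
  omega

/-- Increments of a concave sequence are non-increasing. -/
lemma Udec (T : ℕ) (U : ℕ → ℝ)
    (hconc : ∀ j, 1 ≤ j → j + 1 ≤ T → U (j - 1) + U (j + 1) ≤ 2 * U j) :
    ∀ i j, i ≤ j → j + 1 ≤ T → U (j + 1) - U j ≤ U (i + 1) - U i := by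
  intro i j hij
  induction j, hij using Nat.le_induction with
  | base => intro _; exact le_rfl
  | succ j hj ih =>
    intro hT
    have h1 := ih (by omega)
    have h2 := hconc (j + 1) (by omega) hT
    have he : j + 1 - 1 = j := by omega
    rw [he] at h2
    linarith

/-- Increments of a convex sequence are non-decreasing. -/
lemma Linc (T : ℕ) (L : ℕ → ℝ)
    (hconv : ∀ j, 1 ≤ j → j + 1 ≤ T → 2 * L j ≤ L (j - 1) + L (j + 1)) :
    ∀ i j, i ≤ j → j + 1 ≤ T → L (i + 1) - L i ≤ L (j + 1) - L j := by
  intro i j hij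
  induction j, hij using Nat.le_induction with
  | base => intro _; exact le_rfl
  | succ j hj ih =>
    intro hT
    have h1 := ih (by omega)
    have h2 := hconv (j + 1) (by omega) hT
    have he : j + 1 - 1 = j := by omega
    rw [he] at h2
    linarith

/-- The map `j ↦ U j + L (T - j)` is non-decreasing on `[0, T]`. -/
lemma cross_mono (T : ℕ) (U L : ℕ → ℝ)
    (h7 : ∀ j, 1 ≤ j → j ≤ T → L (T - j + 1) - L (T - j) ≤ U j - U (j - 1)) :
    ∀ a b, a ≤ b → b ≤ T → U a + L (T - a) ≤ U b + L (T - b) := by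
  intro a b hab
  induction b, hab using Nat.le_induction with
  | base => intro _; exact le_rfl
  | succ b hb ih =>
    intro hbT
    have h1 := ih (by omega)
    have h2 := h7 (b + 1) (by omega) hbT
    have he1 : T - (b + 1) + 1 = T - b := by omega
    have he2 : b + 1 - 1 = b := by omega
    rw [he1, he2] at h2
    linarith

/-- Telescoping formula for prefix sums of the vertex increments. -/
lemma prefix_formula (T k : ℕ) (U L : ℕ → ℝ) (hU0 : U 0 = 0) :
    ∀ m, m ≤ T →
      ∑ i ∈ Finset.range m, (if i < k then U (i + 1) - U i else L (T - i) - L (T - i - 1))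
        = U (min m k) + L (T - min m k) - L (T - m) := by
  intro m
  induction m with
  | zero => intro _; simp [hU0]
  | succ m ih =>
    intro hm
    rw [Finset.sum_range_succ, ih (by omega)]
    by_cases hmk : m < k
    · rw [if_pos hmk]
      have h1 : min m k = m := by omega
      have h2 : min (m + 1) k = m + 1 := by omega
      rw [h1, h2]
      ring
    · rw [if_neg hmk]
      have h1 : min m k = k := by omega
      have h2 : min (m + 1) k = k := by omega
      have h3 : T - (m + 1) = T - m - 1 := by omega
      rw [h1, h2, h3]
      ring

/-- A strictly monotone map `Fin m → Fin T` satisfies `i ≤ g i`. -/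
lemma le_of_strictMono {m T : ℕ} (g : Fin m → Fin T) (hg : StrictMono g) :
    ∀ i : Fin m, (i : ℕ) ≤ (g i : ℕ) := by
  suffices h : ∀ n, ∀ hn : n < m, n ≤ (g ⟨n, hn⟩ : ℕ) by
    intro i; exact h i.1 i.2
  intro n
  induction n with
  | zero => intro hn; exact Nat.zero_le _
  | succ n ih =>
    intro hn
    have h1 := ih (by omega)
    have h2 := hg (show (⟨n, by omega⟩ : Fin m) < ⟨n + 1, hn⟩ by
      simp [Fin.lt_def])
    rw [Fin.lt_def] at h2
    omega

/-- Rearrangement: for a non-increasing `f`, the sum over any subset is at most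
the sum over the initial segment of the same size. -/
lemma sum_le_prefix {T : ℕ} (f : Fin T → ℝ)
    (hf : ∀ s t : Fin T, s ≤ t → f t ≤ f s) (S : Finset (Fin T)) :
    ∑ t ∈ S, f t
      ≤ ∑ t ∈ Finset.univ.filter (fun j : Fin T => (j : ℕ) < S.card), f t := by
  have hmT : S.card ≤ T := by
    simpa using Finset.card_le_card (Finset.subset_univ S)
  set m := S.card with hm
  let e : Fin m ↪o Fin T := S.orderEmbOfFin rfl
  have himg : Finset.image e Finset.univ = S := by
    apply Finset.coe_injective
    rw [Finset.coe_image, Finset.coe_univ, Set.image_univ]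
    exact Finset.range_orderEmbOfFin S rfl
  have himg2 : Finset.image (fun i : Fin m => (⟨(i : ℕ), lt_of_lt_of_le i.2 hmT⟩ : Fin T))
      Finset.univ = Finset.univ.filter (fun j : Fin T => (j : ℕ) < m) := by
    ext j
    simp only [Finset.mem_image, Finset.mem_univ, true_and, Finset.mem_filter]
    constructor
    · rintro ⟨i, rfl⟩; exact i.2
    · intro hj; exact ⟨⟨(j : ℕ), hj⟩, rfl⟩
  rw [← himg, ← himg2, Finset.sum_image (fun a _ b _ h => e.injective h),
    Finset.sum_image (fun a _ b _ h => Fin.val_injective (by simpa using congrArg Fin.val h))]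
  apply Finset.sum_le_sum
  intro i _
  apply hf
  rw [Fin.le_def]
  exact le_of_strictMono e e.strictMono i

/-- Rearrangement: for a non-increasing `f`, the sum over any subset is at least
the sum over the final segment of the same size. -/
lemma suffix_le_sum {T : ℕ} (f : Fin T → ℝ)
    (hf : ∀ s t : Fin T, s ≤ t → f t ≤ f s) (S : Finset (Fin T)) :
    ∑ t ∈ Finset.univ.filter (fun j : Fin T => T - S.card ≤ (j : ℕ)), f t
      ≤ ∑ t ∈ S, f t := by
  have hmT : S.card ≤ T := by
    simpa using Finset.card_le_card (Finset.subset_univ S)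
  set g : Fin T → ℝ := fun t => -f t.rev with hg
  have hgmono : ∀ s t : Fin T, s ≤ t → g t ≤ g s := by
    intro s t hst
    simp only [hg, neg_le_neg_iff]
    exact hf _ _ (Fin.rev_le_rev.mpr hst)
  set S' : Finset (Fin T) := S.image Fin.rev with hS'
  have hcard : S'.card = S.card := Finset.card_image_of_injective S Fin.rev_injective
  have h := sum_le_prefix g hgmono S'
  rw [hcard] at h
  have h1 : ∑ t ∈ S', g t = -∑ t ∈ S, f t := by
    rw [hS', Finset.sum_image (fun a _ b _ h => Fin.rev_injective h)]
    simp [hg, Fin.rev_rev]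
  have h2 : ∑ t ∈ Finset.univ.filter (fun j : Fin T => (j : ℕ) < S.card), g t
      = -∑ t ∈ Finset.univ.filter (fun j : Fin T => T - S.card ≤ (j : ℕ)), f t := by
    have himg : (Finset.univ.filter (fun j : Fin T => (j : ℕ) < S.card)).image Fin.rev
        = Finset.univ.filter (fun j : Fin T => T - S.card ≤ (j : ℕ)) := by
      ext j
      simp only [Finset.mem_image, Finset.mem_filter, Finset.mem_univ, true_and]
      constructor
      · rintro ⟨i, hi, rfl⟩
        have := i.2
        rw [Fin.val_rev]
        omega
      · intro hj
        refine ⟨j.rev, ?_, Fin.rev_rev j⟩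
        have := j.2
        rw [Fin.val_rev]
        omega
    rw [← himg, Finset.sum_image (fun a _ b _ h => Fin.rev_injective h)]
    simp [hg, Fin.rev_rev, ← Finset.sum_neg_distrib]
  rw [h1, h2] at h
  linarith

end ULaux

/-- For valid UL-parameters, each vertex candidate `p^(k)` belongs
to `F(u,l)`; its prefix sums are bounded by `u` and its suffix sums bounded
below by `l`. -/
theorem ULvertex_mem (T : ℕ) (hT : 1 ≤ T) (Δt : ℝ) (hΔt : 0 < Δt)
    (u l : ℕ → ℝ) (hvalid : ValidUL T u l) (k : ℕ) (hk : k ≤ T) :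
    ULvertex T Δt u l k ∈ ULset T Δt u l ∧
    (∀ m, 1 ≤ m → m ≤ T →
      Δt * ∑ j ∈ Finset.univ.filter (fun j : Fin T => (j : ℕ) < m),
        ULvertex T Δt u l k j ≤ u m ∧
      l m ≤ Δt * ∑ j ∈ Finset.univ.filter (fun j : Fin T => T - m ≤ (j : ℕ)),
        ULvertex T Δt u l k j) := by
  obtain ⟨hconc, hUpos, hUmono, hconv, hLpos, hLmono, h7⟩ := hvalid
  set U : ℕ → ℝ := ZExt u with hU
  set L : ℕ → ℝ := ZExt l with hL
  have hU0 : U 0 = 0 := by simp [hU, ZExt]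
  have hL0 : L 0 = 0 := by simp [hL, ZExt]
  set hfun : ℕ → ℝ := fun i => if i < k then U (i + 1) - U i else L (T - i) - L (T - i - 1)
    with hhfun
  have hΔne : Δt ≠ 0 := ne_of_gt hΔt
  have key : ∀ t : Fin T, Δt * ULvertex T Δt u l k t = hfun (t : ℕ) := by
    intro t
    simp only [ULvertex, hhfun]
    split_ifs with h <;> field_simp <;> rfl
  have hpdef : ∀ t : Fin T, ULvertex T Δt u l k t = hfun (t : ℕ) / Δt := by
    intro t
    rw [eq_div_iff hΔne, mul_comm, key]
  -- antitonicity of the increments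
  have hdec : ∀ t1 t2 : ℕ, t1 ≤ t2 → t2 < T → hfun t2 ≤ hfun t1 := by
    intro t1 t2 h12 h2T
    simp only [hhfun]
    by_cases h2k : t2 < k
    · rw [if_pos h2k, if_pos (by omega)]
      exact ULaux.Udec T U hconc t1 t2 h12 (by omega)
    · rw [if_neg h2k]
      by_cases h1k : t1 < k
      · rw [if_pos h1k]
        have hk1 : 1 ≤ k := by omega
        have hA : U k - U (k - 1) ≤ U (t1 + 1) - U t1 := by
          have := ULaux.Udec T U hconc t1 (k - 1) (by omega) (by omega)
          have he : k - 1 + 1 = k := by omega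
          rwa [he] at this
        have hB := h7 k hk1 hk
        have hC : L (T - t2) - L (T - t2 - 1) ≤ L (T - k + 1) - L (T - k) := by
          have := ULaux.Linc T L hconv (T - t2 - 1) (T - k) (by omega) (by omega)
          have he : T - t2 - 1 + 1 = T - t2 := by omega
          rwa [he] at this
        rw [hU, hL] at *
        linarith
      · rw [if_neg h1k]
        have := ULaux.Linc T L hconv (T - t2 - 1) (T - t1 - 1) (by omega) (by omega)
        have he1 : T - t2 - 1 + 1 = T - t2 := by omega
        have he2 : T - t1 - 1 + 1 = T - t1 := by omega
        rwa [he1, he2] at this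
  have hpmono : ∀ s t : Fin T, s ≤ t → ULvertex T Δt u l k t ≤ ULvertex T Δt u l k s := by
    intro s t hst
    rw [hpdef, hpdef]
    exact (div_le_div_iff_of_pos_right hΔt).mpr (hdec s t hst t.2)
  have hprefix : ∀ m, m ≤ T →
      Δt * ∑ j ∈ Finset.univ.filter (fun j : Fin T => (j : ℕ) < m), ULvertex T Δt u l k j
        = U (min m k) + L (T - min m k) - L (T - m) := by
    intro m hm
    rw [Finset.mul_sum, Finset.sum_congr rfl (fun j _ => key j),
      ULaux.sum_filter_lt T m hm hfun]
    simp only [hhfun]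
    exact ULaux.prefix_formula T k U L hU0 m hm
  have hsuffix : ∀ m, m ≤ T →
      Δt * ∑ j ∈ Finset.univ.filter (fun j : Fin T => T - m ≤ (j : ℕ)), ULvertex T Δt u l k j
        = (U k + L (T - k)) + L m - (U (min (T - m) k) + L (T - min (T - m) k)) := by
    intro m hm
    rw [Finset.mul_sum, Finset.sum_congr rfl (fun j _ => key j),
      ULaux.sum_filter_ge T m hfun, Finset.sum_Ico_eq_sub _ (Nat.sub_le T m)]
    simp only [hhfun]
    rw [ULaux.prefix_formula T k U L hU0 T le_rfl,
      ULaux.prefix_formula T k U L hU0 (T - m) (by omega)]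
    have h1 : min T k = k := by omega
    have h2 : T - (T - m) = m := by omega
    have h3 : T - T = 0 := by omega
    rw [h1, h2, h3, hL0]
    ring
  have hPB : ∀ m, 1 ≤ m → m ≤ T →
      Δt * ∑ j ∈ Finset.univ.filter (fun j : Fin T => (j : ℕ) < m),
        ULvertex T Δt u l k j ≤ u m := by
    intro m h1 h2
    rw [hprefix m h2]
    have hcm := ULaux.cross_mono T U L h7 (min m k) m (min_le_left m k) h2
    have hum : U m = u m := by simp [hU, ZExt, Nat.one_le_iff_ne_zero.mp h1]
    linarith
  have hSB : ∀ m, 1 ≤ m → m ≤ T →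
      l m ≤ Δt * ∑ j ∈ Finset.univ.filter (fun j : Fin T => T - m ≤ (j : ℕ)),
        ULvertex T Δt u l k j := by
    intro m h1 h2
    rw [hsuffix m h2]
    have hcm := ULaux.cross_mono T U L h7 (min (T - m) k) k (min_le_right _ _) hk
    have hlm : L m = l m := by simp [hL, ZExt, Nat.one_le_iff_ne_zero.mp h1]
    linarith
  refine ⟨?_, fun m h1 h2 => ⟨hPB m h1 h2, hSB m h1 h2⟩⟩
  intro S hS
  have h1 : 1 ≤ S.card := Finset.card_pos.mpr hS
  have h2 : S.card ≤ T := by simpa using Finset.card_le_card (Finset.subset_univ S)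
  constructor
  · calc l S.card ≤ Δt * ∑ j ∈ Finset.univ.filter
          (fun j : Fin T => T - S.card ≤ (j : ℕ)), ULvertex T Δt u l k j := hSB _ h1 h2
      _ ≤ Δt * ∑ t ∈ S, ULvertex T Δt u l k t :=
        mul_le_mul_of_nonneg_left (ULaux.suffix_le_sum _ hpmono S) hΔt.le
  · calc Δt * ∑ t ∈ S, ULvertex T Δt u l k t
        ≤ Δt * ∑ j ∈ Finset.univ.filter
          (fun j : Fin T => (j : ℕ) < S.card), ULvertex T Δt u l k j :=
        mul_le_mul_of_nonneg_left (ULaux.sum_le_prefix _ hpmono S) hΔt.le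
      _ ≤ u S.card := hPB _ h1 h2
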